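/- Let b, c, ν, ρ, s ∈ ℂ with Re(ρ) > 0, Re(c) > 0, Re(ν) > -1, |b| < 1 and Re(s+ν) > 0. Then the Mellin transform of z ↦ e^{-z} G_ν^{(b,c)}(z;ρ) satisfies ∫_0^∞ z^{s-1} e^{-z} G_ν^{(b,c)}(z;ρ) dz = (1/(2^ν Γ(ν+1)²)) · Σ_{k=0}^∞ (-b)^k (c;ρ)_{ν+2k} Γ(s+ν+2k) / ((ν+1)_k ((ν+1)/2)_k ((ν+2)/2)_k · 16^k · k!). -/

import Mathlib

open Complex MeasureTheory Real Set

/-- Extended Gamma function `Γ_ρ(x) = ∫_0^∞ t^(x-1) e^(-t-ρ/t) dt`. -/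
noncomputable def extGamma (ρ x : ℂ) : ℂ :=
  ∫ t in Ioi (0:ℝ), (t:ℂ) ^ (x - 1) * Complex.exp (-(t:ℂ) - ρ / (t:ℂ))

/-- Generalized Pochhammer symbol `(c;ρ)_μ = Γ_ρ(c+μ)/Γ(c)`. -/
noncomputable def genPoch (c ρ μ : ℂ) : ℂ := extGamma ρ (c + μ) / Complex.Gamma c

/-- Unified four parameter Bessel function `G_ν^{(b,c)}(z;ρ)` with complex order,
powers being principal complex powers. -/
noncomputable def unifiedG (b c ν ρ z : ℂ) : ℂ :=
  ∑' k : ℕ, (-b) ^ k * genPoch c ρ (2 * (k:ℂ) + ν) * (z / 2) ^ (2 * (k:ℂ) + ν) /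
    ((k.factorial : ℂ) * Complex.Gamma (ν + (k:ℂ) + 1) * Complex.Gamma (ν + 2 * (k:ℂ) + 1))

/-- Unified four parameter Bessel function with integer order, powers being integer powers. -/
noncomputable def unifiedGInt (b c ρ : ℂ) (ν : ℤ) (z : ℂ) : ℂ :=
  ∑' k : ℕ, (-b) ^ k * genPoch c ρ (2 * (k:ℂ) + (ν:ℂ)) * (z / 2) ^ (2 * (k:ℤ) + ν) /
    ((k.factorial : ℂ) * Complex.Gamma ((ν:ℂ) + (k:ℂ) + 1) * Complex.Gamma ((ν:ℂ) + 2 * (k:ℂ) + 1))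

/-- Pochhammer symbol `(a)_k = Γ(a+k)/Γ(a)`. -/
noncomputable def poch (a : ℂ) (k : ℕ) : ℂ := Complex.Gamma (a + (k:ℂ)) / Complex.Gamma a

/-- Generalized hypergeometric function `₀F₃`. -/
noncomputable def hyp0F3 (a₁ a₂ a₃ w : ℂ) : ℂ :=
  ∑' k : ℕ, w ^ k / (poch a₁ k * poch a₂ k * poch a₃ k * (k.factorial : ℂ))

/-- Generalized hypergeometric function `₂F₃`. -/
noncomputable def hyp2F3 (a₁ a₂ b₁ b₂ b₃ w : ℂ) : ℂ :=
  ∑' k : ℕ, poch a₁ k * poch a₂ k * w ^ k /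
    (poch b₁ k * poch b₂ k * poch b₃ k * (k.factorial : ℂ))

/-- Bessel function of the first kind `J_μ(z)` for real `z > 0`. -/
noncomputable def besselJ (μ : ℂ) (z : ℝ) : ℂ :=
  ∑' k : ℕ, (-1) ^ k * ((z:ℂ) / 2) ^ (2 * (k:ℂ) + μ) /
    ((k.factorial : ℂ) * Complex.Gamma (μ + (k:ℂ) + 1))

/-- Generalized four parameter spherical Bessel function
`g_ν^{(b,c)}(z;ρ) = √(π/(2z)) · G_{ν+1/2}^{(b,c-1/2)}(z;ρ)`. -/
noncomputable def sphG (b c ν ρ : ℂ) (z : ℝ) : ℂ :=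
  (Real.sqrt (π / (2 * z)) : ℂ) * unifiedG b (c - 1/2) (ν + 1/2) ρ (z:ℂ)

/-- Generalized four parameter Bessel-Clifford function
`C_ν^{(b,λ)}(z;ρ) = z^{-ν/2} · G_ν^{(b,λ)}(2√z;ρ)` for real `z > 0`. -/
noncomputable def cliffC (b lam ν ρ : ℂ) (z : ℝ) : ℂ :=
  (z:ℂ) ^ (-ν / 2) * unifiedG b lam ν ρ ((2 * Real.sqrt z : ℝ) : ℂ)

/-! ### Auxiliary lemmas -/

section Aux
open Filter

lemma extGamma_norm_le {ρ x : ℂ} (hρ : 0 < ρ.re) (hx : -1 < x.re) :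
    ‖extGamma ρ x‖ ≤ Real.Gamma (x.re + 1) / ρ.re := by
  have hx1 : 0 < x.re + 1 := by linarith
  have hInt : IntegrableOn (fun t : ℝ => (Real.exp (-t) * t ^ (x.re + 1 - 1)) / ρ.re) (Ioi 0) :=
    (Real.GammaIntegral_convergent hx1).div_const _
  have hIeq : ∫ t in Ioi (0:ℝ), (Real.exp (-t) * t ^ (x.re + 1 - 1)) / ρ.re
      = Real.Gamma (x.re + 1) / ρ.re := by
    rw [integral_div, ← Real.Gamma_eq_integral hx1]
  rw [extGamma, ← hIeq]
  apply norm_integral_le_of_norm_le hInt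
  filter_upwards [ae_restrict_mem measurableSet_Ioi] with t ht
  have ht0 : (0:ℝ) < t := ht
  rw [norm_mul]
  have h1 : ‖(t:ℂ) ^ (x - 1)‖ = t ^ (x.re - 1) := by
    rw [Complex.norm_cpow_eq_rpow_re_of_pos ht0]
    simp
  have h2 : ‖Complex.exp (-(t:ℂ) - ρ / (t:ℂ))‖ = Real.exp (-t - ρ.re / t) := by
    rw [Complex.norm_exp]
    congr 1
    simp [Complex.sub_re, Complex.div_re, Complex.ofReal_re, Complex.ofReal_im,
      Complex.normSq_ofReal]
    field_simp
  rw [h1, h2]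
  have hexp : Real.exp (-t - ρ.re / t) ≤ Real.exp (-t) * (t / ρ.re) := by
    rw [sub_eq_add_neg, Real.exp_add]
    have hu : 0 < ρ.re / t := div_pos hρ ht0
    have : Real.exp (-(ρ.re / t)) ≤ (ρ.re / t)⁻¹ := by
      rw [Real.exp_neg]
      apply inv_anti₀ hu
      have := Real.add_one_le_exp (ρ.re / t)
      linarith
    have h3 : (ρ.re / t)⁻¹ = t / ρ.re := by
      field_simp
    calc Real.exp (-t) * Real.exp (-(ρ.re / t)) ≤ Real.exp (-t) * (ρ.re / t)⁻¹ := by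
          exact mul_le_mul_of_nonneg_left this (Real.exp_nonneg _)
      _ = Real.exp (-t) * (t / ρ.re) := by rw [h3]
  calc t ^ (x.re - 1) * Real.exp (-t - ρ.re / t)
      ≤ t ^ (x.re - 1) * (Real.exp (-t) * (t / ρ.re)) := by
        exact mul_le_mul_of_nonneg_left hexp (Real.rpow_nonneg ht0.le _)
    _ = Real.exp (-t) * t ^ (x.re + 1 - 1) / ρ.re := by
        have : t ^ (x.re + 1 - 1) = t ^ (x.re - 1) * t := by
          rw [show x.re + 1 - 1 = (x.re - 1) + 1 by ring, Real.rpow_add ht0, Real.rpow_one]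
        rw [this]
        field_simp

lemma gamma_lower (w : ℂ) (hw : 0 < w.re) (n : ℕ) :
    Real.Gamma (w.re + n) * ‖Complex.Gamma w‖ ≤ Real.Gamma w.re * ‖Complex.Gamma (w + n)‖ := by
  induction n with
  | zero => simp [mul_comm]
  | succ n ih =>
    have hwn : (0:ℝ) < w.re + n := by positivity
    have hwnC : (w + n) ≠ 0 := by
      intro h
      have := congrArg Complex.re h
      simp at this
      linarith
    have h1 : w + ((n:ℕ)+1 : ℕ) = (w + n) + 1 := by push_cast; ring
    rw [h1, Complex.Gamma_add_one _ hwnC]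
    have h2 : (w.re + ((n:ℕ)+1 : ℕ)) = (w.re + n) + 1 := by push_cast; ring
    rw [h2, Real.Gamma_add_one hwn.ne']
    rw [norm_mul]
    have hre : w.re + n ≤ ‖w + n‖ := by
      have := Complex.re_le_norm (w + n)
      simpa [Complex.add_re] using this
    have hG1 : 0 ≤ Real.Gamma (w.re + n) := (Real.Gamma_pos_of_pos hwn).le
    have hG2 : 0 ≤ Real.Gamma w.re := (Real.Gamma_pos_of_pos hw).le
    have hN : 0 ≤ ‖Complex.Gamma w‖ := norm_nonneg _
    calc (w.re + n) * Real.Gamma (w.re + n) * ‖Complex.Gamma w‖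
        ≤ (w.re + n) * (Real.Gamma w.re * ‖Complex.Gamma (w + n)‖) := by
          rw [mul_assoc]
          exact mul_le_mul_of_nonneg_left ih hwn.le
      _ ≤ ‖w + n‖ * (Real.Gamma w.re * ‖Complex.Gamma (w + n)‖) := by
          apply mul_le_mul_of_nonneg_right hre
          positivity
      _ = Real.Gamma w.re * (‖w + n‖ * ‖Complex.Gamma (w + n)‖) := by ring

lemma gamma_dup_aux (a : ℂ) (ha : 0 < a.re) (k : ℕ) :
    Complex.Gamma (a + 2 * k) * Complex.Gamma (a/2) * Complex.Gamma ((a+1)/2)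
      = Complex.Gamma a * 4 ^ k * Complex.Gamma (a/2 + k) * Complex.Gamma ((a+1)/2 + k) := by
  induction k with
  | zero => simp
  | succ k ih =>
    have hk : (0:ℝ) ≤ (k:ℝ) := Nat.cast_nonneg k
    have ne1 : (a + 2 * k) ≠ 0 := by
      intro h; have h2 := congrArg Complex.re h; simp at h2; linarith
    have ne2 : (a + 2 * k + 1) ≠ 0 := by
      intro h; have h2 := congrArg Complex.re h; simp at h2; linarith
    have ne3 : (a / 2 + k) ≠ 0 := by
      intro h; have h2 := congrArg Complex.re h; simp at h2; linarith
    have ne4 : ((a + 1) / 2 + k) ≠ 0 := by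
      intro h; have h2 := congrArg Complex.re h
      simp [Complex.add_re, Complex.div_re] at h2; linarith
    have e1 : a + 2 * ((k:ℕ)+1:ℕ) = ((a + 2 * k) + 1) + 1 := by push_cast; ring
    have e2 : a / 2 + ((k:ℕ)+1:ℕ) = (a / 2 + k) + 1 := by push_cast; ring
    have e3 : (a + 1) / 2 + ((k:ℕ)+1:ℕ) = ((a + 1) / 2 + k) + 1 := by push_cast; ring
    rw [e1, Complex.Gamma_add_one _ ne2, Complex.Gamma_add_one _ ne1,
      e2, Complex.Gamma_add_one _ ne3, e3, Complex.Gamma_add_one _ ne4, pow_succ]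
    linear_combination (a + 2 * k + 1) * (a + 2 * k) * ih

lemma two_arg_ne_pi : ((2:ℂ)).arg ≠ Real.pi := by
  rw [Ne, Complex.arg_eq_pi_iff]; norm_num

lemma key_integral (s w : ℂ) (h : 0 < (s + w).re) :
    ∫ z in Ioi (0:ℝ), (z:ℂ) ^ (s-1) * Complex.exp (-(z:ℂ)) * ((z:ℂ)/2) ^ w
      = ((2:ℂ) ^ w)⁻¹ * Complex.Gamma (s + w) := by
  rw [Complex.Gamma_eq_integral h, Complex.GammaIntegral, ← integral_const_mul]
  apply setIntegral_congr_fun measurableSet_Ioi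
  intro z hz
  dsimp only
  have hz0 : (0:ℝ) < z := hz
  have hzC : (z:ℂ) ≠ 0 := by exact_mod_cast hz0.ne'
  have hhalf : ((z:ℂ)/2) = (z:ℝ) * ((2:ℝ)⁻¹ : ℝ) := by push_cast; ring
  rw [hhalf, Complex.mul_cpow_ofReal_nonneg hz0.le (by norm_num)]
  have h2 : ((2:ℝ)⁻¹ : ℝ) = ((2:ℂ))⁻¹ := by push_cast; ring
  rw [h2, Complex.inv_cpow _ _ two_arg_ne_pi]
  have hzz : (z:ℂ) ^ (s-1) * Complex.exp (-(z:ℂ)) * ((z:ℂ) ^ w * ((2:ℂ) ^ w)⁻¹)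
      = ((2:ℂ) ^ w)⁻¹ * (Complex.exp (-(z:ℂ)) * ((z:ℂ) ^ (s-1) * (z:ℂ) ^ w)) := by ring
  rw [hzz, ← Complex.cpow_add _ _ hzC]
  have : s - 1 + w = s + w - 1 := by ring
  rw [this]
  have : Complex.exp (-(z:ℂ)) = ((Real.exp (-z) : ℝ) : ℂ) := by
    rw [Complex.ofReal_exp]; push_cast; ring_nf
  rw [this]

set_option maxHeartbeats 1000000 in
lemma term_id (ν s : ℂ) (hν : -1 < ν.re) (k : ℕ) (X : ℂ) :
    X / ((k.factorial : ℂ) * Complex.Gamma (ν + (k:ℂ) + 1) * Complex.Gamma (ν + 2*(k:ℂ) + 1)) *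
      (((2:ℂ) ^ (2*(k:ℂ)+ν))⁻¹ * Complex.Gamma (s + (2*(k:ℂ)+ν)))
    = 1 / ((2:ℂ)^ν * Complex.Gamma (ν+1)^2) *
      (X * Complex.Gamma (s + ν + 2*(k:ℂ)) /
        (poch (ν+1) k * poch ((ν+1)/2) k * poch ((ν+2)/2) k * 16^k * (k.factorial:ℂ))) := by
  have hν1 : (0:ℝ) < (ν+1).re := by simp; linarith
  have hΓν1 : Complex.Gamma (ν+1) ≠ 0 := Complex.Gamma_ne_zero_of_re_pos hν1
  have hA : Complex.Gamma ((ν+1)/2) ≠ 0 := by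
    apply Complex.Gamma_ne_zero_of_re_pos; simp [Complex.div_re]; linarith
  have hB : Complex.Gamma ((ν+2)/2) ≠ 0 := by
    apply Complex.Gamma_ne_zero_of_re_pos; simp [Complex.div_re]; linarith
  have hk : (0:ℝ) ≤ (k:ℝ) := Nat.cast_nonneg k
  have hΓ1k : Complex.Gamma (ν+1+(k:ℂ)) ≠ 0 := by
    apply Complex.Gamma_ne_zero_of_re_pos; simp; linarith
  have hAk : Complex.Gamma ((ν+1)/2+(k:ℂ)) ≠ 0 := by
    apply Complex.Gamma_ne_zero_of_re_pos; simp [Complex.div_re]; linarith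
  have hBk : Complex.Gamma ((ν+2)/2+(k:ℂ)) ≠ 0 := by
    apply Complex.Gamma_ne_zero_of_re_pos; simp [Complex.div_re]; linarith
  have h2ν : (2:ℂ)^ν ≠ 0 := by
    rw [Ne, Complex.cpow_eq_zero_iff]; norm_num
  have h4k : ((4:ℂ))^k ≠ 0 := pow_ne_zero _ (by norm_num)
  have hfact : ((k.factorial:ℂ)) ≠ 0 := by
    exact_mod_cast Nat.cast_ne_zero.mpr k.factorial_ne_zero
  have hdup := gamma_dup_aux (ν+1) hν1 k
  rw [show ((ν+1)+1)/2 = (ν+2)/2 by ring] at hdup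
  have hdup' : Complex.Gamma (ν+1+2*(k:ℂ)) = Complex.Gamma (ν+1) * 4^k *
      Complex.Gamma ((ν+1)/2+(k:ℂ)) * Complex.Gamma ((ν+2)/2+(k:ℂ)) /
      (Complex.Gamma ((ν+1)/2) * Complex.Gamma ((ν+2)/2)) := by
    rw [eq_div_iff (mul_ne_zero hA hB)]
    linear_combination hdup
  rw [show ν + 2*(k:ℂ) + 1 = ν+1+2*(k:ℂ) by ring, hdup',
    show ν + (k:ℂ) + 1 = ν+1+(k:ℂ) by ring,
    show s + (2*(k:ℂ)+ν) = s + ν + 2*(k:ℂ) by ring]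
  have h2pow : (2:ℂ) ^ (2*(k:ℂ)+ν) = 4^k * (2:ℂ)^ν := by
    rw [Complex.cpow_add _ _ (by norm_num : (2:ℂ) ≠ 0)]
    congr 1
    rw [show (2*(k:ℂ)) = (((2*k:ℕ)):ℂ) by push_cast; ring, Complex.cpow_natCast, pow_mul]
    norm_num
  rw [h2pow, show (16:ℂ)^k = 4^k * 4^k by rw [show (16:ℂ) = 4*4 by norm_num, mul_pow]]
  simp only [poch, pow_two]
  field_simp

lemma lin_ratio (a b c d : ℝ) (hd : d ≠ 0) :
    Tendsto (fun k : ℕ => (a + c * k) / (b + d * k)) atTop (nhds (c / d)) := by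
  have h1 : Tendsto (fun k : ℕ => (a / k + c) / (b / k + d)) atTop (nhds (c / d)) := by
    have hn : Tendsto (fun k : ℕ => a / k + c) atTop (nhds (0 + c)) :=
      (tendsto_const_div_atTop_nhds_zero_nat a).add tendsto_const_nhds
    have hdn : Tendsto (fun k : ℕ => b / k + d) atTop (nhds (0 + d)) :=
      (tendsto_const_div_atTop_nhds_zero_nat b).add tendsto_const_nhds
    rw [zero_add] at hn hdn
    exact hn.div hdn hd
  apply h1.congr'
  filter_upwards [eventually_ge_atTop 1] with k hk
  have hk0 : (k:ℝ) ≠ 0 := by positivity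
  field_simp

lemma aux_div (c d x y : ℝ) (hx : x ≠ 0) (hy : y ≠ 0) :
    (c*x)/(d*y) / (x/y) = c/d := by
  by_cases hd : d = 0
  · simp [hd]
  · field_simp

lemma combine4 (r a1 a2 a3 a4 b1 b2 b3 b4 : ℝ) (h1 : b1 ≠ 0) (h2 : b2 ≠ 0)
    (h3 : b3 ≠ 0) (h4 : b4 ≠ 0) :
    r * (a1/b1) * (a2/b2) * (a3/b3) * (a4/b4) = (r*a1*a2*a3*a4)/(b1*b2*b3*b4) := by
  field_simp

set_option maxHeartbeats 2000000 in
lemma summable_M0 (γ σ ν' : ℝ) (hγ : -1 < γ) (hσ : 0 < σ) (hν' : -1 < ν')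
    (r : ℝ) (hr0 : 0 < r) (hr1 : r < 1) :
    Summable (fun k : ℕ => r^k * Real.Gamma (γ+1+2*k) * Real.Gamma (σ+2*k) /
      ((k.factorial:ℝ) * Real.Gamma (ν'+1+k) * Real.Gamma (ν'+1+2*k) * 4^k)) := by
  set M : ℕ → ℝ := fun k => r^k * Real.Gamma (γ+1+2*k) * Real.Gamma (σ+2*k) /
      ((k.factorial:ℝ) * Real.Gamma (ν'+1+k) * Real.Gamma (ν'+1+2*k) * 4^k) with hM
  have hMpos : ∀ k : ℕ, 0 < M k := by
    intro k
    have h0 : (0:ℝ) ≤ (k:ℝ) := Nat.cast_nonneg k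
    have g1 : 0 < Real.Gamma (γ+1+2*k) := Real.Gamma_pos_of_pos (by linarith)
    have g2 : 0 < Real.Gamma (ν'+1+k) := Real.Gamma_pos_of_pos (by linarith)
    have g3 : 0 < Real.Gamma (ν'+1+2*k) := Real.Gamma_pos_of_pos (by linarith)
    have g4 : 0 < Real.Gamma (σ+2*k) := Real.Gamma_pos_of_pos (by linarith)
    have g5 : (0:ℝ) < k.factorial := by exact_mod_cast k.factorial_pos
    rw [hM]
    positivity
  have hratio : ∀ n : ℕ, M (n+1) / M n =
      r * ((γ+1 + 2*n)/(ν'+1 + 2*n)) * ((γ+2 + 2*n)/(ν'+2 + 2*n))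
        * ((σ + 2*n)/(2 + 2*n)) * ((σ+1 + 2*n)/(2*ν'+2 + 2*n)) := by
    intro n
    have h0 : (0:ℝ) ≤ (n:ℝ) := Nat.cast_nonneg n
    have g1 : 0 < Real.Gamma (γ+1+2*n) := Real.Gamma_pos_of_pos (by linarith)
    have g2 : 0 < Real.Gamma (ν'+1+n) := Real.Gamma_pos_of_pos (by linarith)
    have g3 : 0 < Real.Gamma (ν'+1+2*n) := Real.Gamma_pos_of_pos (by linarith)
    have g4 : 0 < Real.Gamma (σ+2*n) := Real.Gamma_pos_of_pos (by linarith)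
    have g5 : (0:ℝ) < n.factorial := by exact_mod_cast n.factorial_pos
    have e1 : Real.Gamma (γ+1+2*((n:ℕ)+1:ℕ)) = (γ+2+2*n)*((γ+1+2*n)*Real.Gamma (γ+1+2*n)) := by
      push_cast
      rw [show γ+1+2*((n:ℝ)+1) = ((γ+2+2*n)+1) by ring, Real.Gamma_add_one (by linarith),
        show γ+2+2*(n:ℝ) = (γ+1+2*n)+1 by ring, Real.Gamma_add_one (by linarith)]
    have e2 : Real.Gamma (σ+2*((n:ℕ)+1:ℕ)) = (σ+1+2*n)*((σ+2*n)*Real.Gamma (σ+2*n)) := by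
      push_cast
      rw [show σ+2*((n:ℝ)+1) = ((σ+1+2*n)+1) by ring, Real.Gamma_add_one (by linarith),
        show σ+1+2*(n:ℝ) = (σ+2*n)+1 by ring, Real.Gamma_add_one (by linarith)]
    have e3 : Real.Gamma (ν'+1+((n:ℕ)+1:ℕ)) = (ν'+1+n)*Real.Gamma (ν'+1+n) := by
      push_cast
      rw [show ν'+1+((n:ℝ)+1) = ((ν'+1+n)+1) by ring, Real.Gamma_add_one (by linarith)]
    have e4 : Real.Gamma (ν'+1+2*((n:ℕ)+1:ℕ)) = (ν'+2+2*n)*((ν'+1+2*n)*Real.Gamma (ν'+1+2*n)) := by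
      push_cast
      rw [show ν'+1+2*((n:ℝ)+1) = ((ν'+2+2*n)+1) by ring, Real.Gamma_add_one (by linarith),
        show ν'+2+2*(n:ℝ) = (ν'+1+2*n)+1 by ring, Real.Gamma_add_one (by linarith)]
    have e5 : ((n+1:ℕ).factorial : ℝ) = ((n:ℝ)+1) * (n.factorial : ℝ) := by
      rw [Nat.factorial_succ]; push_cast; ring
    rw [hM]
    dsimp only
    rw [e1, e2, e3, e4, e5, pow_succ, pow_succ]
    have hnum : r ^ n * r * ((γ + 2 + 2 * (n:ℝ)) * ((γ + 1 + 2 * (n:ℝ)) * Real.Gamma (γ + 1 + 2 * (n:ℝ)))) *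
          ((σ + 1 + 2 * (n:ℝ)) * ((σ + 2 * (n:ℝ)) * Real.Gamma (σ + 2 * (n:ℝ))))
        = (r * (γ + 1 + 2 * (n:ℝ)) * (γ + 2 + 2 * (n:ℝ)) * (σ + 2 * (n:ℝ)) * (σ + 1 + 2 * (n:ℝ))) *
          (r ^ n * Real.Gamma (γ + 1 + 2 * (n:ℝ)) * Real.Gamma (σ + 2 * (n:ℝ))) := by ring
    have hden : ((n:ℝ) + 1) * (n.factorial:ℝ) * ((ν' + 1 + (n:ℝ)) * Real.Gamma (ν' + 1 + (n:ℝ))) *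
          ((ν' + 2 + 2 * (n:ℝ)) * ((ν' + 1 + 2 * (n:ℝ)) * Real.Gamma (ν' + 1 + 2 * (n:ℝ)))) * (4 ^ n * 4)
        = (4 * ((n:ℝ) + 1) * (ν' + 1 + (n:ℝ)) * (ν' + 1 + 2 * (n:ℝ)) * (ν' + 2 + 2 * (n:ℝ))) *
          ((n.factorial:ℝ) * Real.Gamma (ν' + 1 + (n:ℝ)) * Real.Gamma (ν' + 1 + 2 * (n:ℝ)) * 4 ^ n) := by ring
    have hden1 : (ν'+1+2*(n:ℝ)) ≠ 0 := by linarith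
    have hden2 : (ν'+2+2*(n:ℝ)) ≠ 0 := by linarith
    have hden3 : (2+2*(n:ℝ)) ≠ 0 := by linarith
    have hden4 : (2*ν'+2+2*(n:ℝ)) ≠ 0 := by linarith
    have h4n : ((4:ℝ))^n ≠ 0 := by positivity
    have hrn : r^n ≠ 0 := by positivity
    rw [hnum, hden, aux_div _ _ _ _ (by positivity) (by positivity),
      combine4 _ _ _ _ _ _ _ _ _ hden1 hden2 hden3 hden4,
      div_eq_div_iff
        (mul_ne_zero (mul_ne_zero (mul_ne_zero (mul_ne_zero (by norm_num)
          (by linarith : ((n:ℝ)+1) ≠ 0)) (by linarith : (ν'+1+(n:ℝ)) ≠ 0)) hden1) hden2)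
        (mul_ne_zero (mul_ne_zero (mul_ne_zero hden1 hden2) hden3) hden4)]
    ring
  have htend : Tendsto (fun n : ℕ => M (n+1) / M n) atTop (nhds r) := by
    have t1 := lin_ratio (γ+1) (ν'+1) 2 2 (by norm_num)
    have t2 := lin_ratio (γ+2) (ν'+2) 2 2 (by norm_num)
    have t3 := lin_ratio σ 2 2 2 (by norm_num)
    have t4 := lin_ratio (σ+1) (2*ν'+2) 2 2 (by norm_num)
    have hcomb := ((((tendsto_const_nhds (x := r) (f := atTop)).mul t1).mul t2).mul t3).mul t4
    norm_num at hcomb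
    apply hcomb.congr
    intro n
    rw [hratio n]
  apply summable_of_ratio_test_tendsto_lt_one hr1
    (Eventually.of_forall fun n => (hMpos n).ne')
  apply htend.congr
  intro n
  rw [Real.norm_of_nonneg (hMpos (n+1)).le, Real.norm_of_nonneg (hMpos n).le]

set_option maxHeartbeats 1000000 in
lemma norm_term_le (b c ν ρ s : ℂ) (hρ : 0 < ρ.re) (hc : 0 < c.re) (hν : -1 < ν.re)
    (k : ℕ) (z : ℝ) (hz : 0 < z) :
    ‖(z:ℂ) ^ (s - 1) * Complex.exp (-(z:ℂ)) *
      ((-b) ^ k * genPoch c ρ (2 * (k:ℂ) + ν) * ((z:ℂ) / 2) ^ (2 * (k:ℂ) + ν) /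
        ((k.factorial : ℂ) * Complex.Gamma (ν + (k:ℂ) + 1) * Complex.Gamma (ν + 2 * (k:ℂ) + 1)))‖
    ≤ (‖b‖ ^ k * (Real.Gamma (c.re + ν.re + 1 + 2*k) / (ρ.re * ‖Complex.Gamma c‖)) /
        ((k.factorial : ℝ)
          * (Real.Gamma (ν.re+1+k) * ‖Complex.Gamma (ν+1)‖ / Real.Gamma (ν.re+1))
          * (Real.Gamma (ν.re+1+2*k) * ‖Complex.Gamma (ν+1)‖ / Real.Gamma (ν.re+1)))
        * ((2:ℝ)^(-ν.re) / 4^k))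
      * (Real.exp (-z) * z ^ ((s.re + ν.re + 2*k) - 1)) := by
  have hknn : (0:ℝ) ≤ (k:ℝ) := Nat.cast_nonneg k
  have hΓc : (0:ℝ) < ‖Complex.Gamma c‖ :=
    norm_pos_iff.mpr (Complex.Gamma_ne_zero_of_re_pos hc)
  have hν1 : (0:ℝ) < (ν+1).re := by simp; linarith
  have hΓν1 : (0:ℝ) < ‖Complex.Gamma (ν+1)‖ :=
    norm_pos_iff.mpr (Complex.Gamma_ne_zero_of_re_pos hν1)
  have hΓ1 : (0:ℝ) < ‖Complex.Gamma (ν + (k:ℂ) + 1)‖ := by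
    apply norm_pos_iff.mpr
    apply Complex.Gamma_ne_zero_of_re_pos
    simp only [Complex.add_re, Complex.one_re, Complex.natCast_re]
    linarith
  have hΓ2 : (0:ℝ) < ‖Complex.Gamma (ν + 2*(k:ℂ) + 1)‖ := by
    apply norm_pos_iff.mpr
    apply Complex.Gamma_ne_zero_of_re_pos
    have : (ν + 2*(k:ℂ) + 1).re = ν.re + 2*k + 1 := by simp
    rw [this]; linarith
  have hfk : (0:ℝ) < (k.factorial : ℝ) := by exact_mod_cast k.factorial_pos
  have hGr1 : (0:ℝ) < Real.Gamma (ν.re+1) := Real.Gamma_pos_of_pos (by linarith)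
  have hGr1k : (0:ℝ) < Real.Gamma (ν.re+1+k) := Real.Gamma_pos_of_pos (by linarith)
  have hGr2k : (0:ℝ) < Real.Gamma (ν.re+1+2*k) := Real.Gamma_pos_of_pos (by linarith)
  have hGγ : (0:ℝ) < Real.Gamma (c.re + ν.re + 1 + 2*k) :=
    Real.Gamma_pos_of_pos (by linarith)
  -- norm computation
  have e1 : ‖(z:ℂ) ^ (s - 1)‖ = z ^ (s.re - 1) := by
    rw [Complex.norm_cpow_eq_rpow_re_of_pos hz]
    simp
  have e2 : ‖Complex.exp (-(z:ℂ))‖ = Real.exp (-z) := by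
    rw [Complex.norm_exp]
    simp
  have e3 : ‖((z:ℂ) / 2) ^ (2 * (k:ℂ) + ν)‖ = (z/2) ^ (2*(k:ℝ)+ν.re) := by
    rw [show ((z:ℂ)/2) = (((z/2 : ℝ)):ℂ) by push_cast; ring,
      Complex.norm_cpow_eq_rpow_re_of_pos (by linarith)]
    congr 1
    simp
  have e4 : ‖(-b) ^ k‖ = ‖b‖ ^ k := by
    rw [norm_pow, norm_neg]
  have e5 : ‖((k.factorial : ℕ) : ℂ)‖ = ((k.factorial : ℕ) : ℝ) := by
    rw [Complex.norm_natCast]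
  have hnorm : ‖(z:ℂ) ^ (s - 1) * Complex.exp (-(z:ℂ)) *
      ((-b) ^ k * genPoch c ρ (2 * (k:ℂ) + ν) * ((z:ℂ) / 2) ^ (2 * (k:ℂ) + ν) /
        ((k.factorial : ℂ) * Complex.Gamma (ν + (k:ℂ) + 1) * Complex.Gamma (ν + 2 * (k:ℂ) + 1)))‖
      = z ^ (s.re - 1) * Real.exp (-z) *
        (‖b‖ ^ k * ‖genPoch c ρ (2 * (k:ℂ) + ν)‖ * (z/2) ^ (2*(k:ℝ)+ν.re) /
          ((k.factorial : ℝ) * ‖Complex.Gamma (ν + (k:ℂ) + 1)‖ *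
            ‖Complex.Gamma (ν + 2 * (k:ℂ) + 1)‖)) := by
    rw [norm_mul, norm_mul, norm_div, norm_mul, norm_mul, norm_mul, norm_mul,
      e1, e2, e3, e4, e5]
  rw [hnorm]
  -- bound on genPoch
  have hgp : ‖genPoch c ρ (2 * (k:ℂ) + ν)‖
      ≤ Real.Gamma (c.re + ν.re + 1 + 2*k) / (ρ.re * ‖Complex.Gamma c‖) := by
    rw [genPoch, norm_div]
    have hxre : (c + (2 * (k:ℂ) + ν)).re = c.re + ν.re + 2*k := by simp; ring
    have hext := extGamma_norm_le hρ (x := c + (2 * (k:ℂ) + ν)) (by rw [hxre]; linarith)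
    rw [hxre] at hext
    rw [show c.re + ν.re + 1 + 2*(k:ℝ) = c.re + ν.re + 2*k + 1 by ring, ← div_div]
    exact (div_le_div_iff_of_pos_right hΓc).mpr hext
  -- lower bounds on complex Gamma norms
  have hg1 : Real.Gamma (ν.re+1+k) * ‖Complex.Gamma (ν+1)‖ / Real.Gamma (ν.re+1)
      ≤ ‖Complex.Gamma (ν + (k:ℂ) + 1)‖ := by
    have h := gamma_lower (ν+1) hν1 k
    simp only [Complex.add_re, Complex.one_re] at h
    rw [show (ν+1)+(k:ℂ) = ν + (k:ℂ) + 1 by ring] at h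
    rw [div_le_iff₀ hGr1]
    linarith
  have hg2 : Real.Gamma (ν.re+1+2*k) * ‖Complex.Gamma (ν+1)‖ / Real.Gamma (ν.re+1)
      ≤ ‖Complex.Gamma (ν + 2*(k:ℂ) + 1)‖ := by
    have h := gamma_lower (ν+1) hν1 (2*k)
    simp only [Complex.add_re, Complex.one_re] at h
    rw [show (ν+1)+((2*k:ℕ):ℂ) = ν + 2*(k:ℂ) + 1 by push_cast; ring] at h
    rw [show ((2*k:ℕ):ℝ) = 2*(k:ℝ) by push_cast; ring] at h
    rw [div_le_iff₀ hGr1]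
    linarith
  -- rpow algebra
  have hsplit : (z/2) ^ (2*(k:ℝ)+ν.re) = z ^ (2*(k:ℝ)+ν.re) * ((2:ℝ)^(-ν.re) / 4^k) := by
    rw [Real.div_rpow hz.le (by norm_num : (0:ℝ) ≤ 2)]
    have h2p : (2:ℝ) ^ (2*(k:ℝ)+ν.re) = 4^k * (2:ℝ)^ν.re := by
      rw [Real.rpow_add (by norm_num : (0:ℝ) < 2)]
      congr 1
      rw [show (2*(k:ℝ)) = ((2*k:ℕ):ℝ) by push_cast; ring, Real.rpow_natCast, pow_mul]
      norm_num
    rw [h2p, Real.rpow_neg (by norm_num : (0:ℝ) ≤ 2)]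
    have h4 : ((4:ℝ))^k ≠ 0 := by positivity
    have h2 : ((2:ℝ))^ν.re ≠ 0 := by positivity
    field_simp
  have hcollect : z ^ (s.re - 1) * z ^ (2*(k:ℝ)+ν.re) = z ^ ((s.re + ν.re + 2*k) - 1) := by
    rw [← Real.rpow_add hz]
    congr 1
    ring
  -- core inequality
  have hL1pos : 0 < Real.Gamma (ν.re+1+k) * ‖Complex.Gamma (ν+1)‖ / Real.Gamma (ν.re+1) := by
    positivity
  have hL2pos : 0 < Real.Gamma (ν.re+1+2*k) * ‖Complex.Gamma (ν+1)‖ / Real.Gamma (ν.re+1) := by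
    positivity
  have hcore : ‖b‖ ^ k * ‖genPoch c ρ (2 * (k:ℂ) + ν)‖ /
        ((k.factorial : ℝ) * ‖Complex.Gamma (ν + (k:ℂ) + 1)‖ *
          ‖Complex.Gamma (ν + 2 * (k:ℂ) + 1)‖)
      ≤ ‖b‖ ^ k * (Real.Gamma (c.re + ν.re + 1 + 2*k) / (ρ.re * ‖Complex.Gamma c‖)) /
        ((k.factorial : ℝ)
          * (Real.Gamma (ν.re+1+k) * ‖Complex.Gamma (ν+1)‖ / Real.Gamma (ν.re+1))
          * (Real.Gamma (ν.re+1+2*k) * ‖Complex.Gamma (ν+1)‖ / Real.Gamma (ν.re+1))) := by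
    apply div_le_div₀ (by positivity)
    · exact mul_le_mul_of_nonneg_left hgp (by positivity)
    · positivity
    · apply mul_le_mul (mul_le_mul_of_nonneg_left hg1 hfk.le) hg2 hL2pos.le
      positivity
  -- assemble
  have hEq : z ^ (s.re - 1) * Real.exp (-z) *
      (‖b‖ ^ k * ‖genPoch c ρ (2 * (k:ℂ) + ν)‖ * (z/2) ^ (2*(k:ℝ)+ν.re) /
        ((k.factorial : ℝ) * ‖Complex.Gamma (ν + (k:ℂ) + 1)‖ *
          ‖Complex.Gamma (ν + 2 * (k:ℂ) + 1)‖))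
      = (‖b‖ ^ k * ‖genPoch c ρ (2 * (k:ℂ) + ν)‖ /
          ((k.factorial : ℝ) * ‖Complex.Gamma (ν + (k:ℂ) + 1)‖ *
            ‖Complex.Gamma (ν + 2 * (k:ℂ) + 1)‖)) * ((2:ℝ)^(-ν.re) / 4^k) *
        (Real.exp (-z) * z ^ ((s.re + ν.re + 2*k) - 1)) := by
    rw [hsplit, ← hcollect]
    ring
  rw [hEq]
  have hfac : (0:ℝ) ≤ ((2:ℝ)^(-ν.re) / 4^k) * (Real.exp (-z) * z ^ ((s.re + ν.re + 2*k) - 1)) := by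
    positivity
  calc (‖b‖ ^ k * ‖genPoch c ρ (2 * (k:ℂ) + ν)‖ /
          ((k.factorial : ℝ) * ‖Complex.Gamma (ν + (k:ℂ) + 1)‖ *
            ‖Complex.Gamma (ν + 2 * (k:ℂ) + 1)‖)) * ((2:ℝ)^(-ν.re) / 4^k) *
        (Real.exp (-z) * z ^ ((s.re + ν.re + 2*k) - 1))
      ≤ (‖b‖ ^ k * (Real.Gamma (c.re + ν.re + 1 + 2*k) / (ρ.re * ‖Complex.Gamma c‖)) /
          ((k.factorial : ℝ)
            * (Real.Gamma (ν.re+1+k) * ‖Complex.Gamma (ν+1)‖ / Real.Gamma (ν.re+1))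
            * (Real.Gamma (ν.re+1+2*k) * ‖Complex.Gamma (ν+1)‖ / Real.Gamma (ν.re+1))))
          * ((2:ℝ)^(-ν.re) / 4^k) * (Real.exp (-z) * z ^ ((s.re + ν.re + 2*k) - 1)) := by
        exact mul_le_mul_of_nonneg_right
          (mul_le_mul_of_nonneg_right hcore (by positivity)) (by positivity)
    _ = _ := rfl

end Aux

set_option maxHeartbeats 4000000 in
theorem stmt5 (b c ν ρ s : ℂ) (hρ : 0 < ρ.re) (hc : 0 < c.re) (hν : -1 < ν.re)
    (hb : ‖b‖ < 1) (hs : 0 < (s + ν).re) :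
    (∫ z in Ioi (0:ℝ), (z:ℂ) ^ (s - 1) * Complex.exp (-(z:ℂ)) * unifiedG b c ν ρ (z:ℂ)) =
      1 / ((2:ℂ) ^ ν * Complex.Gamma (ν + 1) ^ 2) *
        ∑' k : ℕ, (-b) ^ k * genPoch c ρ (ν + 2 * (k:ℂ)) * Complex.Gamma (s + ν + 2 * (k:ℂ)) /
          (poch (ν + 1) k * poch ((ν + 1) / 2) k * poch ((ν + 2) / 2) k *
            16 ^ k * (k.factorial : ℂ)) := by
  set f : ℕ → ℝ → ℂ := fun k z =>
    (z:ℂ) ^ (s - 1) * Complex.exp (-(z:ℂ)) *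
      ((-b) ^ k * genPoch c ρ (2 * (k:ℂ) + ν) * ((z:ℂ) / 2) ^ (2 * (k:ℂ) + ν) /
        ((k.factorial : ℂ) * Complex.Gamma (ν + (k:ℂ) + 1) *
          Complex.Gamma (ν + 2 * (k:ℂ) + 1))) with hf
  have hcont0 : ∀ w : ℂ, ContinuousOn (fun z : ℝ => (z:ℂ) ^ w) (Ioi (0:ℝ)) := by
    intro w z hz
    have hz0 : (0:ℝ) < z := hz
    have : ContinuousAt (fun z : ℝ => (z:ℂ) ^ w) z := by
      apply ContinuousAt.comp (g := fun u : ℂ => u ^ w)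
      · exact continuousAt_cpow_const (by simp [Complex.mem_slitPlane_iff]; exact hz0)
      · exact Complex.continuous_ofReal.continuousAt
    exact this.continuousWithinAt
  have hcont1 : ∀ w : ℂ, ContinuousOn (fun z : ℝ => ((z:ℂ)/2) ^ w) (Ioi (0:ℝ)) := by
    intro w z hz
    have hz0 : (0:ℝ) < z := hz
    have : ContinuousAt (fun z : ℝ => ((z:ℂ)/2) ^ w) z := by
      apply ContinuousAt.comp (g := fun u : ℂ => u ^ w)
      · apply continuousAt_cpow_const
        simp only [Complex.mem_slitPlane_iff]
        left
        simp only [Complex.div_re, Complex.ofReal_re]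
        norm_num
        positivity
      · exact (Complex.continuous_ofReal.div_const 2).continuousAt
    exact this.continuousWithinAt
  have hexpc : Continuous (fun z : ℝ => Complex.exp (-(z:ℂ))) :=
    Complex.continuous_exp.comp Complex.continuous_ofReal.neg
  have hmeas : ∀ k, AEStronglyMeasurable (f k) (volume.restrict (Ioi (0:ℝ))) := by
    intro k
    apply ContinuousOn.aestronglyMeasurable _ measurableSet_Ioi
    exact ((hcont0 (s-1)).mul hexpc.continuousOn).mul
      ((continuousOn_const.mul (hcont1 (2*(k:ℂ)+ν))).div_const _)
  have hσ' : 0 < s.re + ν.re := by simpa [Complex.add_re] using hs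
  have hγ' : -1 < c.re + ν.re := by linarith
  have habs : (0:ℝ) ≤ ‖b‖ := norm_nonneg b
  set r : ℝ := (‖b‖ + 1)/2 with hrdef
  have hr0 : 0 < r := by rw [hrdef]; positivity
  have hr1 : r < 1 := by rw [hrdef]; linarith
  have hbr : ‖b‖ ≤ r := by rw [hrdef]; linarith
  have hΓc : (0:ℝ) < ‖Complex.Gamma c‖ :=
    norm_pos_iff.mpr (Complex.Gamma_ne_zero_of_re_pos hc)
  have hν1re : (0:ℝ) < (ν+1).re := by simp; linarith
  have hΓν1 : (0:ℝ) < ‖Complex.Gamma (ν+1)‖ :=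
    norm_pos_iff.mpr (Complex.Gamma_ne_zero_of_re_pos hν1re)
  have hGr1 : (0:ℝ) < Real.Gamma (ν.re+1) := Real.Gamma_pos_of_pos (by linarith)
  set Cst : ℝ := (2:ℝ)^(-ν.re) * Real.Gamma (ν.re+1)^2 /
      (ρ.re * ‖Complex.Gamma c‖ * ‖Complex.Gamma (ν+1)‖^2) with hCst
  have hCst0 : 0 < Cst := by rw [hCst]; positivity
  set B : ℕ → ℝ := fun k => ‖b‖ ^ k *
      (Real.Gamma (c.re + ν.re + 1 + 2*k) / (ρ.re * ‖Complex.Gamma c‖)) /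
      ((k.factorial : ℝ)
        * (Real.Gamma (ν.re+1+k) * ‖Complex.Gamma (ν+1)‖ / Real.Gamma (ν.re+1))
        * (Real.Gamma (ν.re+1+2*k) * ‖Complex.Gamma (ν+1)‖ / Real.Gamma (ν.re+1)))
      * ((2:ℝ)^(-ν.re) / 4^k) with hB
  set M0 : ℕ → ℝ := fun k => r^k * Real.Gamma (c.re+ν.re+1+2*k) *
      Real.Gamma (s.re+ν.re+2*k) /
      ((k.factorial:ℝ) * Real.Gamma (ν.re+1+k) * Real.Gamma (ν.re+1+2*k) * 4^k) with hM0
  have hgpos : ∀ k : ℕ, (0:ℝ) < Real.Gamma (c.re+ν.re+1+2*k) ∧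
      0 < Real.Gamma (s.re+ν.re+2*k) ∧ 0 < Real.Gamma (ν.re+1+k) ∧
      0 < Real.Gamma (ν.re+1+2*k) ∧ (0:ℝ) < (k.factorial:ℝ) := by
    intro k
    have h0 : (0:ℝ) ≤ (k:ℝ) := Nat.cast_nonneg k
    exact ⟨Real.Gamma_pos_of_pos (by linarith), Real.Gamma_pos_of_pos (by linarith),
      Real.Gamma_pos_of_pos (by linarith), Real.Gamma_pos_of_pos (by linarith),
      by exact_mod_cast k.factorial_pos⟩
  have hBnn : ∀ k : ℕ, 0 ≤ B k := by
    intro k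
    obtain ⟨g1, g2, g3, g4, g5⟩ := hgpos k
    rw [hB]
    dsimp only
    apply mul_nonneg
    apply div_nonneg
    · exact mul_nonneg (pow_nonneg habs k) (by positivity)
    · positivity
    · positivity
  have hbd : ∀ k : ℕ, (∫⁻ z in Ioi (0:ℝ), ‖f k z‖₊)
      ≤ ENNReal.ofReal (B k * Real.Gamma (s.re+ν.re+2*k)) := by
    intro k
    have h0 : (0:ℝ) ≤ (k:ℝ) := Nat.cast_nonneg k
    have hσ2k : (0:ℝ) < s.re + ν.re + 2*k := by linarith
    have hint : IntegrableOn
        (fun z:ℝ => B k * (Real.exp (-z) * z ^ (s.re+ν.re+2*(k:ℝ) - 1))) (Ioi 0) :=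
      (Real.GammaIntegral_convergent hσ2k).const_mul _
    calc (∫⁻ z in Ioi (0:ℝ), ‖f k z‖₊)
        ≤ ∫⁻ z in Ioi (0:ℝ),
            ENNReal.ofReal (B k * (Real.exp (-z) * z ^ (s.re+ν.re+2*(k:ℝ) - 1))) := by
          apply lintegral_mono_ae
          filter_upwards [ae_restrict_mem measurableSet_Ioi] with z hz
          rw [← enorm_eq_nnnorm, ← ofReal_norm]
          apply ENNReal.ofReal_le_ofReal
          have := norm_term_le b c ν ρ s hρ hc hν k z hz
          rw [hf, hB]
          exact this
      _ = ENNReal.ofReal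
            (∫ z in Ioi (0:ℝ), B k * (Real.exp (-z) * z ^ (s.re+ν.re+2*(k:ℝ) - 1))) := by
          rw [← ofReal_integral_eq_lintegral_ofReal hint]
          filter_upwards [ae_restrict_mem measurableSet_Ioi] with z hz
          have hz0 : (0:ℝ) < z := hz
          have := hBnn k
          positivity
      _ = ENNReal.ofReal (B k * Real.Gamma (s.re+ν.re+2*k)) := by
          rw [integral_const_mul, ← Real.Gamma_eq_integral hσ2k]
  have hWle : ∀ k : ℕ, B k * Real.Gamma (s.re+ν.re+2*k) ≤ Cst * M0 k := by
    intro k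
    obtain ⟨g1, g2, g3, g4, g5⟩ := hgpos k
    have h4k : (0:ℝ) < 4^k := by positivity
    have hrk : (0:ℝ) ≤ r^k := by positivity
    have hRest : (0:ℝ) ≤ (Real.Gamma (c.re + ν.re + 1 + 2*k) / (ρ.re * ‖Complex.Gamma c‖)) /
        ((k.factorial : ℝ)
          * (Real.Gamma (ν.re+1+k) * ‖Complex.Gamma (ν+1)‖ / Real.Gamma (ν.re+1))
          * (Real.Gamma (ν.re+1+2*k) * ‖Complex.Gamma (ν+1)‖ / Real.Gamma (ν.re+1)))
        * ((2:ℝ)^(-ν.re) / 4^k) * Real.Gamma (s.re+ν.re+2*k) := by positivity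
    calc B k * Real.Gamma (s.re+ν.re+2*k)
        = ‖b‖ ^ k *
          ((Real.Gamma (c.re + ν.re + 1 + 2*k) / (ρ.re * ‖Complex.Gamma c‖)) /
          ((k.factorial : ℝ)
            * (Real.Gamma (ν.re+1+k) * ‖Complex.Gamma (ν+1)‖ / Real.Gamma (ν.re+1))
            * (Real.Gamma (ν.re+1+2*k) * ‖Complex.Gamma (ν+1)‖ / Real.Gamma (ν.re+1)))
          * ((2:ℝ)^(-ν.re) / 4^k) * Real.Gamma (s.re+ν.re+2*k)) := by
          rw [hB]; ring
      _ ≤ r ^ k *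
          ((Real.Gamma (c.re + ν.re + 1 + 2*k) / (ρ.re * ‖Complex.Gamma c‖)) /
          ((k.factorial : ℝ)
            * (Real.Gamma (ν.re+1+k) * ‖Complex.Gamma (ν+1)‖ / Real.Gamma (ν.re+1))
            * (Real.Gamma (ν.re+1+2*k) * ‖Complex.Gamma (ν+1)‖ / Real.Gamma (ν.re+1)))
          * ((2:ℝ)^(-ν.re) / 4^k) * Real.Gamma (s.re+ν.re+2*k)) :=
          mul_le_mul_of_nonneg_right (pow_le_pow_left₀ habs hbr k) hRest
      _ = Cst * M0 k := by
          rw [hCst, hM0]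
          dsimp only
          field_simp
  have hsummable : Summable (fun k : ℕ => Cst * M0 k) := by
    have := summable_M0 (c.re+ν.re) (s.re+ν.re) ν.re hγ' hσ' hν r hr0 hr1
    rw [hM0]
    exact this.mul_left Cst
  have hsum_fin : (∑' k : ℕ, ∫⁻ z in Ioi (0:ℝ), ‖f k z‖₊) ≠ ⊤ := by
    have hnn : ∀ k : ℕ, 0 ≤ Cst * M0 k := by
      intro k
      obtain ⟨g1, g2, g3, g4, g5⟩ := hgpos k
      have : 0 ≤ M0 k := by rw [hM0]; dsimp only; positivity
      exact mul_nonneg hCst0.le this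
    have hle : (∑' k : ℕ, ∫⁻ z in Ioi (0:ℝ), ‖f k z‖₊)
        ≤ ∑' k : ℕ, ENNReal.ofReal (Cst * M0 k) := by
      apply ENNReal.tsum_le_tsum
      intro k
      exact (hbd k).trans (ENNReal.ofReal_le_ofReal (hWle k))
    have : (∑' k : ℕ, ENNReal.ofReal (Cst * M0 k)) < ⊤ := by
      rw [← ENNReal.ofReal_tsum_of_nonneg hnn hsummable]
      exact ENNReal.ofReal_lt_top
    exact (lt_of_le_of_lt hle this).ne
  have step1 : (∫ z in Ioi (0:ℝ), (z:ℂ) ^ (s - 1) * Complex.exp (-(z:ℂ)) *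
      unifiedG b c ν ρ (z:ℂ)) = ∫ z in Ioi (0:ℝ), ∑' k : ℕ, f k z := by
    apply setIntegral_congr_fun measurableSet_Ioi
    intro z hz
    dsimp only [hf]
    rw [unifiedG, ← tsum_mul_left]
  rw [step1, integral_tsum hmeas hsum_fin, ← tsum_mul_left]
  apply tsum_congr
  intro k
  have hposk : 0 < (s + (2*(k:ℂ)+ν)).re := by
    have he : (s + (2*(k:ℂ)+ν)).re = (s+ν).re + 2*(k:ℝ) := by
      simp [Complex.add_re, Complex.mul_re]; ring
    have hknn : (0:ℝ) ≤ (k:ℝ) := Nat.cast_nonneg k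
    rw [he]; linarith
  have hrw : ∀ z : ℝ, f k z = ((-b) ^ k * genPoch c ρ (2 * (k:ℂ) + ν) /
      ((k.factorial : ℂ) * Complex.Gamma (ν + (k:ℂ) + 1) *
        Complex.Gamma (ν + 2 * (k:ℂ) + 1))) *
      ((z:ℂ) ^ (s-1) * Complex.exp (-(z:ℂ)) * ((z:ℂ)/2) ^ (2*(k:ℂ)+ν)) := by
    intro z
    simp only [hf]
    ring
  calc (∫ z in Ioi (0:ℝ), f k z)
      = ((-b) ^ k * genPoch c ρ (2 * (k:ℂ) + ν) /
          ((k.factorial : ℂ) * Complex.Gamma (ν + (k:ℂ) + 1) *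
            Complex.Gamma (ν + 2 * (k:ℂ) + 1))) *
        ∫ z in Ioi (0:ℝ), (z:ℂ) ^ (s-1) * Complex.exp (-(z:ℂ)) * ((z:ℂ)/2) ^ (2*(k:ℂ)+ν) := by
        simp_rw [hrw]
        rw [integral_const_mul]
    _ = ((-b) ^ k * genPoch c ρ (2 * (k:ℂ) + ν)) /
          ((k.factorial : ℂ) * Complex.Gamma (ν + (k:ℂ) + 1) *
            Complex.Gamma (ν + 2 * (k:ℂ) + 1)) *
        (((2:ℂ) ^ (2*(k:ℂ)+ν))⁻¹ * Complex.Gamma (s + (2*(k:ℂ)+ν))) := by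
        rw [key_integral _ _ hposk]
    _ = 1 / ((2:ℂ) ^ ν * Complex.Gamma (ν + 1) ^ 2) *
        ((-b) ^ k * genPoch c ρ (ν + 2 * (k:ℂ)) * Complex.Gamma (s + ν + 2 * (k:ℂ)) /
          (poch (ν + 1) k * poch ((ν + 1) / 2) k * poch ((ν + 2) / 2) k *
            16 ^ k * (k.factorial : ℂ))) := by
        rw [term_id ν s hν k]
        rw [show 2 * (k:ℂ) + ν = ν + 2 * (k:ℂ) by ring]
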